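/- In the sequential execution of blocks on an initially empty FIFO queue (enqueues of each block before its dequeues), if the i-th dequeue of block b is non-null, then it returns the value of the e-th enqueue overall, where e = i + sumEnq(b−1) − size(b−1), sumEnq(b−1) is the total number of enqueues in blocks 1..b−1, and size is given by the recurrence size(b) = max(0, size(b−1) + numEnq(b) − numDeq(b)). -/

import Mathlib

/-- Dequeue: remove the oldest element if nonempty; a null dequeue leaves the queue
unchanged. -/
def deqN : List ℕ → List ℕ
  | [] => []
  | _ :: t => t

/-- Total number of enqueues in blocks `1..b`. -/
def sumEnq (nE : ℕ → ℕ) (b : ℕ) : ℕ := ∑ j ∈ Finset.Icc 1 b, nE j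

/-- Perform the enqueues of block `b`; the enqueues are labelled by their global
rank, i.e. the `k`-th enqueue of block `b` enqueues the value `sumEnq (b-1) + k`. -/
def pushBlock (nE : ℕ → ℕ) (b : ℕ) (q : List ℕ) : List ℕ :=
  q ++ (List.range (nE b)).map (fun k => sumEnq nE (b - 1) + 1 + k)

/-- Execute blocks `1..b` in order on an initially empty FIFO queue; within block
`b`, its enqueues occur first, then its dequeues. -/
def runBlocksN (nE nD : ℕ → ℕ) : ℕ → List ℕ
  | 0 => []
  | b + 1 => deqN^[nD (b + 1)] (pushBlock nE (b + 1) (runBlocksN nE nD b))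

/-- Natural-number version of the size recurrence. -/
def szN (nE nD : ℕ → ℕ) : ℕ → ℕ
  | 0 => 0
  | b + 1 => szN nE nD b + nE (b + 1) - nD (b + 1)

lemma deqN_eq_tail (l : List ℕ) : deqN l = l.tail := by
  cases l <;> rfl

lemma deqN_iterate (d : ℕ) (l : List ℕ) : deqN^[d] l = l.drop d := by
  induction d generalizing l with
  | zero => simp
  | succ n ih =>
    rw [Function.iterate_succ_apply', ih, deqN_eq_tail, List.tail_drop]

lemma drop_range' : ∀ (m s n : ℕ), (List.range' s n).drop m = List.range' (s + m) (n - m) := by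
  intro m
  induction m with
  | zero => simp
  | succ m ih =>
    intro s n
    cases n with
    | zero => simp
    | succ n =>
      rw [List.range'_succ]
      simpa [← Nat.add_assoc, Nat.add_comm, Nat.add_left_comm] using ih (s + 1) n

lemma sumEnq_succ (nE : ℕ → ℕ) (b : ℕ) :
    sumEnq nE (b + 1) = sumEnq nE b + nE (b + 1) := by
  unfold sumEnq
  rw [Finset.sum_Icc_succ_top (by omega)]

lemma pushBlock_range' (nE nD : ℕ → ℕ) (b : ℕ)
    (hrun : runBlocksN nE nD b =
      List.range' (sumEnq nE b - szN nE nD b + 1) (szN nE nD b))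
    (hle : szN nE nD b ≤ sumEnq nE b) :
    pushBlock nE (b + 1) (runBlocksN nE nD b) =
      List.range' (sumEnq nE b - szN nE nD b + 1) (szN nE nD b + nE (b + 1)) := by
  unfold pushBlock
  rw [hrun]
  have h1 : (List.range (nE (b + 1))).map (fun k => sumEnq nE (b + 1 - 1) + 1 + k) =
      List.range' (sumEnq nE b + 1) (nE (b + 1)) := by
    rw [List.range'_eq_map_range]
    simp
  rw [h1]
  have := @List.range'_append (sumEnq nE b - szN nE nD b + 1) (szN nE nD b) (nE (b + 1)) 1
  rw [show sumEnq nE b - szN nE nD b + 1 + 1 * szN nE nD b = sumEnq nE b + 1 by omega] at this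
  rw [show (List.range' (sumEnq nE b - szN nE nD b + 1) (szN nE nD b) : List ℕ) =
      List.range' (sumEnq nE b - szN nE nD b + 1) (szN nE nD b) 1 from rfl, this]

lemma run_invariant (nE nD : ℕ → ℕ) : ∀ b,
    runBlocksN nE nD b =
      List.range' (sumEnq nE b - szN nE nD b + 1) (szN nE nD b) ∧
    szN nE nD b ≤ sumEnq nE b := by
  intro b
  induction b with
  | zero => simp [runBlocksN, szN, sumEnq]
  | succ b ih =>
    obtain ⟨hrun, hle⟩ := ih
    have hpush := pushBlock_range' nE nD b hrun hle
    have hs : sumEnq nE (b + 1) = sumEnq nE b + nE (b + 1) := sumEnq_succ nE b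
    constructor
    · show deqN^[nD (b + 1)] (pushBlock nE (b + 1) (runBlocksN nE nD b)) = _
      rw [hpush, deqN_iterate, drop_range']
      by_cases hc : nD (b + 1) ≤ szN nE nD b + nE (b + 1)
      · congr 1
        · show sumEnq nE b - szN nE nD b + 1 + nD (b + 1) =
            sumEnq nE (b + 1) - szN nE nD (b + 1) + 1
          simp only [szN, hs]
          omega
      · have h1 : szN nE nD b + nE (b + 1) - nD (b + 1) = 0 := by omega
        have h2 : szN nE nD (b + 1) = 0 := by simp only [szN]; omega
        rw [h1, h2]
        simp
    · show szN nE nD (b + 1) ≤ sumEnq nE (b + 1)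
      simp only [szN, hs]
      omega

lemma size_eq_szN (nE nD : ℕ → ℕ) (size : ℕ → ℤ)
    (h0 : size 0 = 0)
    (hrec : ∀ b, size (b + 1) =
      max 0 (size b + (nE (b + 1) : ℤ) - (nD (b + 1) : ℤ))) :
    ∀ b, size b = (szN nE nD b : ℤ) := by
  intro b
  induction b with
  | zero => simpa [szN] using h0
  | succ b ih =>
    rw [hrec, ih]
    simp only [szN]
    omega

/-- If the `i`-th dequeue of block `b` is non-null (the queue is nonempty when it
executes), then it returns the value of the `e`-th enqueue overall, where
`e = i + sumEnq (b-1) - size (b-1)` and `size` satisfies the queue-size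
recurrence. -/
theorem nonnull_dequeue_value (nE nD : ℕ → ℕ) (size : ℕ → ℤ)
    (h0 : size 0 = 0)
    (hrec : ∀ b, size (b + 1) =
      max 0 (size b + (nE (b + 1) : ℤ) - (nD (b + 1) : ℤ)))
    (b i : ℕ) (hb : 1 ≤ b) (hi : 1 ≤ i) (hin : i ≤ nD b)
    (hnonnull : deqN^[i - 1] (pushBlock nE b (runBlocksN nE nD (b - 1))) ≠ []) :
    ∃ m, (deqN^[i - 1] (pushBlock nE b (runBlocksN nE nD (b - 1)))).head? = some m ∧
      (m : ℤ) = (i : ℤ) + (sumEnq nE (b - 1) : ℤ) - size (b - 1) := by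
  obtain ⟨b', rfl⟩ : ∃ b', b = b' + 1 := ⟨b - 1, by omega⟩
  simp only [Nat.add_sub_cancel] at *
  obtain ⟨hrun, hle⟩ := run_invariant nE nD b'
  have hpush := pushBlock_range' nE nD b' hrun hle
  set A := sumEnq nE b' with hA
  set s := szN nE nD b' with hs
  rw [hpush, deqN_iterate, drop_range'] at hnonnull ⊢
  have hlen : 1 ≤ s + nE (b' + 1) - (i - 1) := by
    by_contra h
    push_neg at h
    rw [show s + nE (b' + 1) - (i - 1) = 0 by omega] at hnonnull
    simp at hnonnull
  obtain ⟨n, hn⟩ : ∃ n, s + nE (b' + 1) - (i - 1) = n + 1 := ⟨s + nE (b' + 1) - (i - 1) - 1, by omega⟩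
  rw [hn, List.range'_succ]
  refine ⟨A - s + 1 + (i - 1), by simp, ?_⟩
  have hsize := size_eq_szN nE nD size h0 hrec b'
  rw [hsize, ← hs]
  have : s ≤ A := hle
  push_cast
  omega
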